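/- Let P ⊂ ℝ^{1+n} be a polytope, let v₁, …, v_N be the vertices of P lying on its upper hull P^max, and for each such vertex define the truncated normal cone N′_P(v) := {c ∈ N_P(v) : c₁ ≥ 0}, with ω(N′_P(v)) > 0 for every vertex on the upper hull. Let g₁, …, g_K be independent standard Gaussian vectors in ℝ^{1+n}, each replaced by its negation whenever its first coordinate is negative (so that all samples have nonnegative first coordinate). Set Ñ := log(1 / max_k(1 − ω(N′_P(v_k)))). Then the probability that some upper-hull vertex v_k is not the maximizer of ⟨g_j, ·⟩ over P for any j ∈ [K] is at most N · max_k (1 − ω(N′_P(v_k)))^K; in particular, if K ≥ (1/Ñ) log(N/δ), then with probability at least 1 − δ every vertex of P^max is recorded as a maximizer of some sampled functional. -/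

import Mathlib

open scoped RealInnerProductSpace
open MeasureTheory
open scoped ENNReal

/-- The standard inner product pairing on `ℝ^{1+n} = ℝ × ℝⁿ`. -/
noncomputable def pairing {n : ℕ} (u w : ℝ × EuclideanSpace ℝ (Fin n)) : ℝ :=
  u.1 * w.1 + ⟪u.2, w.2⟫

/-- The normal cone to a set `P ⊆ ℝ^{1+n}` at a point `v`. -/
def normalCone {n : ℕ} (P : Set (ℝ × EuclideanSpace ℝ (Fin n)))
    (v : ℝ × EuclideanSpace ℝ (Fin n)) : Set (ℝ × EuclideanSpace ℝ (Fin n)) :=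
  {c | ∀ z ∈ P, pairing c (z - v) ≤ 0}

/-- The truncated normal cone `N′_P(v) = {c ∈ N_P(v) : c₁ ≥ 0}`. -/
def truncNormalCone {n : ℕ} (P : Set (ℝ × EuclideanSpace ℝ (Fin n)))
    (v : ℝ × EuclideanSpace ℝ (Fin n)) : Set (ℝ × EuclideanSpace ℝ (Fin n)) :=
  {c ∈ normalCone P v | 0 ≤ c.1}

/-- The upper hull of a set `P ⊆ ℝ^{1+n}` (coordinates written `(λ, x)`). -/
def upperHull {n : ℕ} (P : Set (ℝ × EuclideanSpace ℝ (Fin n))) :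
    Set (ℝ × EuclideanSpace ℝ (Fin n)) :=
  {p ∈ P | ∀ t : ℝ, (t, p.2) ∈ P → t ≤ p.1}

/-- The standard Gaussian measure on `ℝⁿ`. -/
noncomputable def stdGaussian (n : ℕ) : Measure (EuclideanSpace ℝ (Fin n)) :=
  (Measure.pi fun _ : Fin n => ProbabilityTheory.gaussianReal 0 1).map
    (EuclideanSpace.equiv (Fin n) ℝ).symm

instance (n : ℕ) : IsProbabilityMeasure (stdGaussian n) := by
  unfold stdGaussian
  exact Measure.isProbabilityMeasure_map
    ((EuclideanSpace.equiv (Fin n) ℝ).symm.continuous.measurable.aemeasurable)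

/-- The standard Gaussian measure on `ℝ^{1+n} = ℝ × ℝⁿ`. -/
noncomputable def stdGaussianProd (n : ℕ) : Measure (ℝ × EuclideanSpace ℝ (Fin n)) :=
  (ProbabilityTheory.gaussianReal 0 1).prod (stdGaussian n)

instance (n : ℕ) : IsProbabilityMeasure (stdGaussianProd n) := by
  unfold stdGaussianProd
  infer_instance

/-- The solid angle of a cone `K ⊆ ℝ^{1+n}`: `ω(K) = P(g ∈ K)` for a standard
Gaussian `g`. -/
noncomputable def solidAngle {n : ℕ} (K : Set (ℝ × EuclideanSpace ℝ (Fin n))) : ℝ :=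
  (stdGaussianProd n K).toReal

/-- Replace a sample by its negation whenever its first coordinate is negative
(this preserves the standard Gaussian distribution). -/
noncomputable def flipSample {n : ℕ} (g : ℝ × EuclideanSpace ℝ (Fin n)) :
    ℝ × EuclideanSpace ℝ (Fin n) :=
  if g.1 < 0 then -g else g

lemma isClosed_normalCone {n : ℕ} (P : Set (ℝ × EuclideanSpace ℝ (Fin n)))
    (v : ℝ × EuclideanSpace ℝ (Fin n)) : IsClosed (normalCone P v) := by
  have : normalCone P v = ⋂ z ∈ P, {c | pairing c (z - v) ≤ 0} := by
    ext c; simp [normalCone]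
  rw [this]
  refine isClosed_biInter fun z _ => ?_
  exact isClosed_le (by
    unfold pairing
    exact (continuous_fst.mul continuous_const).add
      (continuous_snd.inner continuous_const)) continuous_const

lemma isClosed_truncNormalCone {n : ℕ} (P : Set (ℝ × EuclideanSpace ℝ (Fin n)))
    (v : ℝ × EuclideanSpace ℝ (Fin n)) : IsClosed (truncNormalCone P v) :=
  (isClosed_normalCone P v).inter (isClosed_le continuous_const continuous_fst)

lemma measurable_flipSample {n : ℕ} : Measurable (flipSample (n := n)) := by
  unfold flipSample
  exact Measurable.ite (measurableSet_lt measurable_fst measurable_const)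
    measurable_neg measurable_id

lemma stdGaussianProd_fst_neg_pos (n : ℕ) :
    0 < stdGaussianProd n {c | c.1 < 0} := by
  have h : {c : ℝ × EuclideanSpace ℝ (Fin n) | c.1 < 0} = Set.Iio 0 ×ˢ Set.univ := by
    ext c; simp
  rw [stdGaussianProd, h, Measure.prod_prod, measure_univ, mul_one, pos_iff_ne_zero]
  intro h0
  have := (ProbabilityTheory.gaussianReal_absolutelyContinuous' 0 one_ne_zero) h0
  simp [Real.volume_Iio] at this

/-- Upper-hull vertex sampling: let `P = conv(S) ⊆ ℝ^{1+n}` be a polytope with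
upper-hull vertices `v₁, …, v_N`, whose truncated normal cones all have
positive solid angle, and let `g₁, …, g_K` be i.i.d. standard Gaussian samples,
each negated when its first coordinate is negative.  The probability that some
upper-hull vertex `v_k` is not the maximizer of `⟨g_j, ·⟩` over `P` for any `j`
is at most `N · (max_k (1 − ω(N′_P(v_k))))^K`; consequently, if
`K ≥ (1/Ñ) log(N/δ)` with `Ñ = log(1 / max_k (1 − ω(N′_P(v_k))))`, then with
probability at least `1 − δ` every upper-hull vertex is recorded as a maximizer
of some sampled functional. -/
theorem sampling_records_upper_hull_vertices (n N K : ℕ) [NeZero N]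
    (δ : ℝ) (hδ : 0 < δ)
    (S : Finset (ℝ × EuclideanSpace ℝ (Fin n))) (hS : S.Nonempty)
    (v : Fin N → ℝ × EuclideanSpace ℝ (Fin n)) (hvinj : Function.Injective v)
    (hvrange : Set.range v =
      Set.extremePoints ℝ (convexHull ℝ (S : Set (ℝ × EuclideanSpace ℝ (Fin n)))) ∩
        upperHull (convexHull ℝ (S : Set (ℝ × EuclideanSpace ℝ (Fin n)))))
    (hω : ∀ k : Fin N, 0 < solidAngle (truncNormalCone
      (convexHull ℝ (S : Set (ℝ × EuclideanSpace ℝ (Fin n)))) (v k))) :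
    (((Measure.pi fun _ : Fin K => stdGaussianProd n)
        {g : Fin K → ℝ × EuclideanSpace ℝ (Fin n) | ∃ k : Fin N, ∀ j : Fin K,
          flipSample (g j) ∉ normalCone
            (convexHull ℝ (S : Set (ℝ × EuclideanSpace ℝ (Fin n)))) (v k)}).toReal
      ≤ N * (Finset.univ.sup' Finset.univ_nonempty (fun k : Fin N =>
          1 - solidAngle (truncNormalCone
            (convexHull ℝ (S : Set (ℝ × EuclideanSpace ℝ (Fin n)))) (v k)))) ^ K) ∧
    ((K : ℝ) ≥
        (1 / Real.log (1 / Finset.univ.sup' Finset.univ_nonempty (fun k : Fin N =>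
          1 - solidAngle (truncNormalCone
            (convexHull ℝ (S : Set (ℝ × EuclideanSpace ℝ (Fin n)))) (v k))))) *
          Real.log (N / δ) →
      1 - δ ≤ ((Measure.pi fun _ : Fin K => stdGaussianProd n)
        {g : Fin K → ℝ × EuclideanSpace ℝ (Fin n) | ∀ k : Fin N, ∃ j : Fin K,
          flipSample (g j) ∈ normalCone
            (convexHull ℝ (S : Set (ℝ × EuclideanSpace ℝ (Fin n)))) (v k)}).toReal) := by
  classical
  set P : Set (ℝ × EuclideanSpace ℝ (Fin n)) :=
    convexHull ℝ (S : Set (ℝ × EuclideanSpace ℝ (Fin n))) with hP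
  set μ := stdGaussianProd n with hμ
  set Pi := Measure.pi fun _ : Fin K => stdGaussianProd n with hPi
  set q : ℝ := Finset.univ.sup' Finset.univ_nonempty (fun k : Fin N =>
    1 - solidAngle (truncNormalCone P (v k))) with hq
  set C : Fin N → Set (ℝ × EuclideanSpace ℝ (Fin n)) := fun k => normalCone P (v k) with hC
  set T : Fin N → Set (ℝ × EuclideanSpace ℝ (Fin n)) := fun k => truncNormalCone P (v k) with hT
  set B : Fin N → Set (ℝ × EuclideanSpace ℝ (Fin n)) := fun k => flipSample ⁻¹' (C k)ᶜ with hB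
  have hBmeas : ∀ k, MeasurableSet (B k) := fun k =>
    measurable_flipSample ((isClosed_normalCone P (v k)).measurableSet.compl)
  -- one-sample bound
  have hTsub : ∀ k, T k ⊆ flipSample ⁻¹' (C k) := by
    intro k c hc
    have h1 : ¬ c.1 < 0 := not_lt.mpr hc.2
    simp only [Set.mem_preimage, flipSample, if_neg h1]
    exact hc.1
  have hB_le : ∀ k, (μ (B k)).toReal ≤ 1 - solidAngle (T k) := by
    intro k
    have h1 : μ (T k) ≤ μ (flipSample ⁻¹' (C k)) := measure_mono (hTsub k)
    have h2 : μ (B k) = 1 - μ (flipSample ⁻¹' (C k)) := by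
      have : B k = (flipSample ⁻¹' (C k))ᶜ := rfl
      rw [this, measure_compl (measurable_flipSample
        (isClosed_normalCone P (v k)).measurableSet) (measure_ne_top _ _), measure_univ]
    have h3 : μ (B k) ≤ 1 - μ (T k) := h2 ▸ tsub_le_tsub_left h1 1
    have h4 : (μ (B k)).toReal ≤ (1 - μ (T k)).toReal :=
      ENNReal.toReal_mono (by simp [ENNReal.sub_ne_top]) h3
    refine h4.trans ?_
    rw [ENNReal.toReal_sub_of_le prob_le_one ENNReal.one_ne_top, ENNReal.toReal_one]
    exact le_refl _
  have hle_q : ∀ k, (μ (B k)).toReal ≤ q := by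
    intro k
    exact (hB_le k).trans (Finset.le_sup'
      (fun k : Fin N => 1 - solidAngle (truncNormalCone P (v k))) (Finset.mem_univ k))
  have k₀ : Fin N := ⟨0, Nat.pos_of_ne_zero (NeZero.ne N)⟩
  have hq_nonneg : 0 ≤ q := le_trans ENNReal.toReal_nonneg (hle_q k₀)
  have hq1 : q < 1 := by
    rw [hq, Finset.sup'_lt_iff]
    intro k _
    have := hω k
    linarith
  have hωhalf : solidAngle (T k₀) < 1 := by
    have hsub : T k₀ ⊆ {c : ℝ × EuclideanSpace ℝ (Fin n) | c.1 < 0}ᶜ :=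
      fun c hc => not_lt.mpr hc.2
    have h1 : μ (T k₀) ≤ μ ({c : ℝ × EuclideanSpace ℝ (Fin n) | c.1 < 0}ᶜ) :=
      measure_mono hsub
    have h2 : μ ({c : ℝ × EuclideanSpace ℝ (Fin n) | c.1 < 0}ᶜ) < 1 := by
      rw [measure_compl (measurableSet_lt measurable_fst measurable_const)
        (measure_ne_top _ _), measure_univ]
      exact ENNReal.sub_lt_self ENNReal.one_ne_top one_ne_zero
        (stdGaussianProd_fst_neg_pos n).ne'
    have h3 : μ (T k₀) < 1 := lt_of_le_of_lt h1 h2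
    have : (μ (T k₀)).toReal < (1 : ℝ≥0∞).toReal :=
      (ENNReal.toReal_lt_toReal (measure_ne_top _ _) ENNReal.one_ne_top).mpr h3
    simpa [solidAngle] using this
  have hqpos : 0 < q := by
    have : 1 - solidAngle (T k₀) ≤ q := Finset.le_sup'
      (fun k : Fin N => 1 - solidAngle (truncNormalCone P (v k))) (Finset.mem_univ k₀)
    linarith
  -- main event computation
  have hE1eq : {g : Fin K → ℝ × EuclideanSpace ℝ (Fin n) | ∃ k : Fin N, ∀ j : Fin K,
      flipSample (g j) ∉ normalCone P (v k)}
      = ⋃ k : Fin N, Set.pi Set.univ fun _ : Fin K => B k := by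
    ext g
    simp [Set.mem_iUnion, Set.mem_pi, hB, hC]
  have hpi : ∀ k : Fin N, Pi (Set.pi Set.univ fun _ : Fin K => B k) = (μ (B k)) ^ K := by
    intro k
    rw [hPi, Measure.pi_pi]
    simp [Finset.prod_const, hμ]
  have hE1meas : MeasurableSet (⋃ k : Fin N, Set.pi Set.univ fun _ : Fin K => B k) :=
    MeasurableSet.iUnion fun k => MeasurableSet.univ_pi fun _ => hBmeas k
  have hbound : (Pi {g : Fin K → ℝ × EuclideanSpace ℝ (Fin n) | ∃ k : Fin N, ∀ j : Fin K,
      flipSample (g j) ∉ normalCone P (v k)}).toReal ≤ N * q ^ K := by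
    rw [hE1eq]
    have h1 : Pi (⋃ k : Fin N, Set.pi Set.univ fun _ : Fin K => B k)
        ≤ ∑ k : Fin N, (μ (B k)) ^ K := by
      refine (measure_iUnion_fintype_le _ _).trans ?_
      exact Finset.sum_le_sum fun k _ => le_of_eq (hpi k)
    have h2 : (∑ k : Fin N, (μ (B k)) ^ K) ≠ ⊤ :=
      ENNReal.sum_ne_top.mpr fun k _ => ENNReal.pow_ne_top (measure_ne_top _ _)
    refine (ENNReal.toReal_mono h2 h1).trans ?_
    rw [ENNReal.toReal_sum fun k _ => ENNReal.pow_ne_top (measure_ne_top _ _)]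
    have h3 : ∀ k ∈ Finset.univ, ((μ (B k)) ^ K).toReal ≤ q ^ K := by
      intro k _
      rw [ENNReal.toReal_pow]
      exact pow_le_pow_left₀ ENNReal.toReal_nonneg (hle_q k) K
    calc ∑ k : Fin N, ((μ (B k)) ^ K).toReal ≤ ∑ _k : Fin N, q ^ K :=
          Finset.sum_le_sum h3
      _ = N * q ^ K := by simp [Finset.sum_const, mul_comm]
  refine ⟨hbound, ?_⟩
  intro hK
  -- show N * q^K ≤ δ
  have hN1 : (1 : ℝ) ≤ N := by
    have := Nat.pos_of_ne_zero (NeZero.ne N)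
    exact_mod_cast this
  have hNpos : (0 : ℝ) < N := lt_of_lt_of_le one_pos hN1
  have hL : 0 < Real.log (1 / q) := Real.log_pos (one_lt_one_div hqpos hq1)
  have hlogq : Real.log (1 / q) = -Real.log q := by
    rw [one_div, Real.log_inv]
  have h5 : Real.log ((N : ℝ) / δ) ≤ K * Real.log (1 / q) := by
    have := mul_le_mul_of_nonneg_right hK hL.le
    rw [mul_comm ((1 / Real.log (1 / q)) * Real.log ((N : ℝ) / δ))] at this
    field_simp at this ⊢
    linarith
  have h6 : (K : ℝ) * Real.log q ≤ Real.log (δ / (N : ℝ)) := by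
    rw [Real.log_div hδ.ne' hNpos.ne']
    rw [hlogq, Real.log_div hNpos.ne' hδ.ne'] at h5
    linarith
  have h7 : q ^ K ≤ δ / N := by
    have : q ^ K = Real.exp ((K : ℝ) * Real.log q) := by
      rw [Real.exp_nat_mul, Real.exp_log hqpos]
    rw [this]
    calc Real.exp ((K : ℝ) * Real.log q) ≤ Real.exp (Real.log (δ / N)) :=
          Real.exp_le_exp.mpr h6
      _ = δ / N := Real.exp_log (div_pos hδ hNpos)
  have h8 : (N : ℝ) * q ^ K ≤ δ := by
    calc (N : ℝ) * q ^ K ≤ N * (δ / N) := by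
          exact mul_le_mul_of_nonneg_left h7 hNpos.le
      _ = δ := by field_simp
  -- complement
  have hE2eq : {g : Fin K → ℝ × EuclideanSpace ℝ (Fin n) | ∀ k : Fin N, ∃ j : Fin K,
      flipSample (g j) ∈ normalCone P (v k)}
      = (⋃ k : Fin N, Set.pi Set.univ fun _ : Fin K => B k)ᶜ := by
    rw [← hE1eq]
    ext g
    simp only [Set.mem_setOf_eq, Set.mem_compl_iff]
    push_neg
    rfl
  have hcompl : Pi ((⋃ k : Fin N, Set.pi Set.univ fun _ : Fin K => B k)ᶜ)
      = 1 - Pi (⋃ k : Fin N, Set.pi Set.univ fun _ : Fin K => B k) := by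
    rw [measure_compl hE1meas (measure_ne_top _ _), measure_univ]
  rw [hE2eq, hcompl, ENNReal.toReal_sub_of_le prob_le_one ENNReal.one_ne_top,
    ENNReal.toReal_one]
  have := hbound
  rw [hE1eq] at this
  linarith
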